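/- Let n be a positive integer, η > 0 and α > 0 real numbers, Π : Matrix (Fin n) (Fin n) ℝ a diagonal matrix with strictly positive diagonal entries, L : Matrix (Fin n) (Fin n) ℝ a symmetric matrix such that L + (α*η)•Π is positive definite, and Y_+, Y_- : Matrix (Fin n) (Fin n) ℝ arbitrary. Define H(F) = (α*η/2) * trace((F − Y_+)ᵀ * Π * (F − Y_+)) + (η/2) * trace((F − Y_-)ᵀ * Π * (F − Y_-)) + (1/2) * trace(Fᵀ * (L − η•Π) * F). Then F_v = η • (L + (α*η)•Π)⁻¹ * Π * (α•Y_+ + Y_-) is the unique minimizer of H over all F : Matrix (Fin n) (Fin n) ℝ. -/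

import Mathlib

open Matrix

/-- trace of `Mᵀ * A * M` for posdef `A`: nonneg, and zero only if `M = 0`. -/
lemma trace_conj_posdef {n : ℕ} (A M : Matrix (Fin n) (Fin n) ℝ) (hA : A.PosDef) :
    0 ≤ (Mᵀ * A * M).trace ∧ ((Mᵀ * A * M).trace = 0 → M = 0) := by
  have hdiag : ∀ j, (Mᵀ * A * M) j j = dotProduct (fun i => M i j) (A *ᵥ fun i => M i j) := by
    intro j
    simp [Matrix.mul_apply, dotProduct, Matrix.mulVec, Finset.mul_sum, Finset.sum_mul, mul_assoc]
    rw [Finset.sum_comm]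
  have hnn : ∀ j, 0 ≤ (Mᵀ * A * M) j j := by
    intro j
    rw [hdiag j]
    by_cases h : (fun i => M i j) = 0
    · simp [h]
    · have := hA.dotProduct_mulVec_pos h
      simpa using this.le
  constructor
  · exact Finset.sum_nonneg fun j _ => hnn j
  · intro htr
    have hz : ∀ j, (Mᵀ * A * M) j j = 0 := by
      intro j
      have := (Finset.sum_eq_zero_iff_of_nonneg (fun j _ => hnn j)).mp htr
      exact this j (Finset.mem_univ j)
    ext i j
    by_contra h
    have hne : (fun i => M i j) ≠ 0 := fun hc => h (congrFun hc i)
    have := hA.dotProduct_mulVec_pos hne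
    simp only [star_trivial] at this
    rw [← hdiag j, hz j] at this
    exact lt_irrefl 0 this

/-- For `η > 0`, `α > 0`, `Pmat` diagonal with positive diagonal,
`L` symmetric with `L + (α*η)•Pmat` positive definite, and arbitrary `Y₊`, `Y₋`,
the matrix `F_v = η • (L + (α*η)•Pmat)⁻¹ * Pmat * (α•Y₊ + Y₋)` is the unique
minimizer of
`H(F) = (α*η/2) trace((F−Y₊)ᵀ Pmat (F−Y₊)) + (η/2) trace((F−Y₋)ᵀ Pmat (F−Y₋))
        + (1/2) trace(Fᵀ (L − η•Pmat) F)`. -/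
theorem cpcp_balanced_vertical_propagation_unique_minimizer
    (n : ℕ) (hn : 0 < n) (η α : ℝ) (hη : 0 < η) (hα : 0 < α)
    (Pmat : Matrix (Fin n) (Fin n) ℝ)
    (hPmatdiag : Pmat.IsDiag) (hPmatpos : ∀ i, 0 < Pmat i i)
    (L : Matrix (Fin n) (Fin n) ℝ) (hLsymm : L.IsSymm)
    (hposdef : (L + (α * η) • Pmat).PosDef)
    (Yp Ym : Matrix (Fin n) (Fin n) ℝ)
    (H : Matrix (Fin n) (Fin n) ℝ → ℝ)
    (hH : ∀ F, H F = (α * η / 2) * ((F - Yp)ᵀ * Pmat * (F - Yp)).trace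
        + (η / 2) * ((F - Ym)ᵀ * Pmat * (F - Ym)).trace
        + (1 / 2) * (Fᵀ * (L - η • Pmat) * F).trace)
    (Fv : Matrix (Fin n) (Fin n) ℝ)
    (hFv : Fv = η • ((L + (α * η) • Pmat)⁻¹ * Pmat * (α • Yp + Ym))) :
    (∀ F, H Fv ≤ H F) ∧ (∀ F, H F = H Fv → F = Fv) := by
  set A : Matrix (Fin n) (Fin n) ℝ := L + (α * η) • Pmat with hA
  have hPsymm : Pmatᵀ = Pmat := hPmatdiag.isSymm
  have hLs : Lᵀ = L := hLsymm
  have hAsymm : Aᵀ = A := by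
    simp [hA, Matrix.transpose_add, Matrix.transpose_smul, hPsymm, hLs]
  -- swap lemma
  have swap : ∀ (B : Matrix (Fin n) (Fin n) ℝ), Bᵀ = B →
      ∀ X Y : Matrix (Fin n) (Fin n) ℝ, (Xᵀ * B * Y).trace = (Yᵀ * B * X).trace := by
    intro B hB X Y
    conv_lhs => rw [← Matrix.trace_transpose]
    simp [Matrix.transpose_mul, hB, Matrix.mul_assoc]
  -- A * Fv = η • (Pmat * (α • Yp + Ym))
  have hAFv : A * Fv = η • (Pmat * (α • Yp + Ym)) := by
    rw [hFv, Matrix.mul_smul]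
    congr 1
    rw [← Matrix.mul_assoc, ← Matrix.mul_assoc,
      Matrix.mul_nonsing_inv A ((Matrix.isUnit_iff_isUnit_det A).mp hposdef.isUnit),
      Matrix.one_mul]
  -- the stationarity relation, traced against any X
  have s1 : ∀ X : Matrix (Fin n) (Fin n) ℝ,
      (Xᵀ * L * Fv).trace + (α * η) * (Xᵀ * Pmat * Fv).trace
        = (α * η) * (Xᵀ * Pmat * Yp).trace + η * (Xᵀ * Pmat * Ym).trace := by
    intro X
    have h1 : Xᵀ * (A * Fv) = Xᵀ * (η • (Pmat * (α • Yp + Ym))) := by rw [hAFv]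
    have h2 := congrArg Matrix.trace h1
    simp only [hA, Matrix.add_mul, Matrix.smul_mul, Matrix.mul_add, Matrix.mul_smul,
      Matrix.trace_add, Matrix.trace_smul, smul_eq_mul, ← Matrix.mul_assoc] at h2
    linarith [h2]
  -- expansion of quadratic forms
  have expand : ∀ (B : Matrix (Fin n) (Fin n) ℝ), Bᵀ = B →
      ∀ X Y : Matrix (Fin n) (Fin n) ℝ,
      ((X - Y)ᵀ * B * (X - Y)).trace
        = (Xᵀ * B * X).trace - 2 * (Xᵀ * B * Y).trace + (Yᵀ * B * Y).trace := by
    intro B hB X Y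
    have hs := swap B hB X Y
    simp only [Matrix.transpose_sub, Matrix.sub_mul, Matrix.mul_sub, Matrix.trace_sub]
    linarith
  -- key: H F - H Fv = (1/2) * trace((F-Fv)ᵀ A (F-Fv))
  have key : ∀ F, H F - H Fv = (1 / 2) * ((F - Fv)ᵀ * A * (F - Fv)).trace := by
    intro F
    have e1 := expand Pmat hPsymm F Yp
    have e2 := expand Pmat hPsymm F Ym
    have e3 := expand Pmat hPsymm Fv Yp
    have e4 := expand Pmat hPsymm Fv Ym
    have e5 := expand A hAsymm F Fv
    have hL1 : ∀ X : Matrix (Fin n) (Fin n) ℝ,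
        (Xᵀ * (L - η • Pmat) * X).trace
          = (Xᵀ * L * X).trace - η * (Xᵀ * Pmat * X).trace := by
      intro X
      simp [Matrix.mul_sub, Matrix.sub_mul, Matrix.mul_smul, Matrix.smul_mul]
    have hA1 : ∀ X Y : Matrix (Fin n) (Fin n) ℝ,
        (Xᵀ * A * Y).trace = (Xᵀ * L * Y).trace + (α * η) * (Xᵀ * Pmat * Y).trace := by
      intro X Y
      simp [hA, Matrix.mul_add, Matrix.add_mul, Matrix.mul_smul, Matrix.smul_mul]
    rw [hH F, hH Fv, e5, hA1 F F, hA1 F Fv, hA1 Fv Fv, hL1 F, hL1 Fv]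
    rw [e1, e2, e3, e4]
    have hsF := s1 F
    have hsFv := s1 Fv
    ring_nf
    ring_nf at hsF hsFv
    linarith [hsF, hsFv]
  constructor
  · intro F
    have h0 := (trace_conj_posdef A (F - Fv) hposdef).1
    have := key F
    linarith
  · intro F hEq
    have h0 := key F
    rw [hEq, sub_self] at h0
    have hz : ((F - Fv)ᵀ * A * (F - Fv)).trace = 0 := by linarith
    have := (trace_conj_posdef A (F - Fv) hposdef).2 hz
    exact sub_eq_zero.mp this
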